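/- Let J be the 4×4 matrix with rows (0,0,1,0), (0,0,0,-1), (-1,0,0,0), (0,1,0,0), and define ω(a,b) = ⟨a, Jb⟩. Let A(z) be the 4×4 matrix with rows (0,0,1,0), (0,0,0,ε), (λ - f'(û(z)), 1, -c, 0), (-1, λ/ε + γ, 0, -c), for any continuous function û, constants ε > 0, γ, c, and λ ∈ ℝ. If Y₁, Y₂ solve Y' = A(z)Y, then (d/dz) ω(Y₁(z), Y₂(z)) = -c ω(Y₁(z), Y₂(z)); consequently e^{cz} ω(Y₁(z), Y₂(z)) is constant in z. -/

import Mathlib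

open Real Matrix

/-- The symplectic form `ω(a,b) = ⟨a, Jb⟩` evaluated on any two solutions of the
linearized eigenvalue system `Y' = A(z)Y` satisfies `ω' = -cω`; hence
`e^{cz} ω(Y₁(z), Y₂(z))` is constant in `z`. -/
theorem stmt_7 (a ε γ c lam : ℝ) (hε : 0 < ε)
    (uhat : ℝ → ℝ) (huhat : Continuous uhat)
    (f : ℝ → ℝ) (hf : ∀ x, f x = x * (1 - x) * (x - a))
    (J : Matrix (Fin 4) (Fin 4) ℝ)
    (hJ : J = !![0,0,1,0; 0,0,0,-1; -1,0,0,0; 0,1,0,0])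
    (ω : (Fin 4 → ℝ) → (Fin 4 → ℝ) → ℝ)
    (hω : ∀ x y, ω x y = x ⬝ᵥ (J *ᵥ y))
    (A : ℝ → Matrix (Fin 4) (Fin 4) ℝ)
    (hA : ∀ z, A z = !![0,0,1,0; 0,0,0,ε;
      lam - deriv f (uhat z), 1, -c, 0; -1, lam/ε + γ, 0, -c])
    (Y₁ Y₂ : ℝ → Fin 4 → ℝ)
    (hY₁ : ∀ z, HasDerivAt Y₁ (A z *ᵥ Y₁ z) z)
    (hY₂ : ∀ z, HasDerivAt Y₂ (A z *ᵥ Y₂ z) z) :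
    (∀ z, HasDerivAt (fun t => ω (Y₁ t) (Y₂ t)) (-c * ω (Y₁ z) (Y₂ z)) z) ∧
    (∀ z₁ z₂ : ℝ, Real.exp (c * z₁) * ω (Y₁ z₁) (Y₂ z₁)
      = Real.exp (c * z₂) * ω (Y₁ z₂) (Y₂ z₂)) := by
  have hωeq : ∀ x y : Fin 4 → ℝ,
      ω x y = x 0 * y 2 - x 1 * y 3 - x 2 * y 0 + x 3 * y 1 := by
    intro x y
    rw [hω, hJ]
    simp [dotProduct, mulVec, Fin.sum_univ_four, Matrix.vecHead, Matrix.vecTail]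
    ring
  have hd : ∀ z, HasDerivAt (fun t => ω (Y₁ t) (Y₂ t)) (-c * ω (Y₁ z) (Y₂ z)) z := by
    intro z
    have h1 := hasDerivAt_pi.mp (hY₁ z)
    have h2 := hasDerivAt_pi.mp (hY₂ z)
    have key : HasDerivAt (fun t => ω (Y₁ t) (Y₂ t))
        ((A z *ᵥ Y₁ z) 0 * Y₂ z 2 + Y₁ z 0 * (A z *ᵥ Y₂ z) 2
          - ((A z *ᵥ Y₁ z) 1 * Y₂ z 3 + Y₁ z 1 * (A z *ᵥ Y₂ z) 3)
          - ((A z *ᵥ Y₁ z) 2 * Y₂ z 0 + Y₁ z 2 * (A z *ᵥ Y₂ z) 0)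
          + ((A z *ᵥ Y₁ z) 3 * Y₂ z 1 + Y₁ z 3 * (A z *ᵥ Y₂ z) 1)) z := by
      have := ((((h1 0).mul (h2 2)).sub ((h1 1).mul (h2 3))).sub
        ((h1 2).mul (h2 0))).add ((h1 3).mul (h2 1))
      simpa only [hωeq, Pi.mul_def, Pi.sub_def, Pi.add_def] using this
    convert key using 1
    rw [hωeq, hA]
    simp [mulVec, dotProduct, Fin.sum_univ_four]
    ring
  refine ⟨hd, ?_⟩
  intro z₁ z₂
  set F : ℝ → ℝ := fun z => Real.exp (c * z) * ω (Y₁ z) (Y₂ z) with hF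
  have hdF : ∀ z, HasDerivAt F 0 z := by
    intro z
    have he : HasDerivAt (fun z : ℝ => Real.exp (c * z)) (c * Real.exp (c * z)) z := by
      simpa [mul_comm] using ((hasDerivAt_id z).const_mul c).exp
    have := he.mul (hd z)
    convert this using 1
    · rfl
    · rfl
    · rfl
    · ring
  have : ∀ x y : ℝ, F x = F y := fun x y =>
    is_const_of_deriv_eq_zero (fun z => (hdF z).differentiableAt)
      (fun z => (hdF z).deriv) x y
  exact this z₁ z₂
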